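/- arXiv:1212.1850 — 6 statements merged into one kernel-verified Lean document; each statement's English description precedes it below -/
import Mathlib

section
/- For reals α, β, γ, δ, ε with βγ = φ, βδ = γε = α, the 4×4 matrices of the form [[a,b,c,d],[αc,a,γd,δb],[αb,βd,a,εc],[βγd,βc,γb,a]] form a set closed under matrix addition and multiplication. -/
/-- The general matrix form of a cyclic 4D number `a·1 + b·I + c·J + d·K`. -/
def cyc4 (α β γ δ ε a b c d : ℝ) : Matrix (Fin 4) (Fin 4) ℝ :=
  !![a, b, c, d;
     α * c, a, γ * d, δ * b;
     α * b, β * d, a, ε * c;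
     β * γ * d, β * c, γ * b, a]

theorem stmt_12 (α β γ δ ε : ℝ) (hβδ : β * δ = α) (hγε : γ * ε = α) :
    ∀ a₁ b₁ c₁ d₁ a₂ b₂ c₂ d₂ : ℝ,
      (∃ a b c d : ℝ,
        cyc4 α β γ δ ε a₁ b₁ c₁ d₁ + cyc4 α β γ δ ε a₂ b₂ c₂ d₂ =
          cyc4 α β γ δ ε a b c d) ∧
      (∃ a b c d : ℝ,
        cyc4 α β γ δ ε a₁ b₁ c₁ d₁ * cyc4 α β γ δ ε a₂ b₂ c₂ d₂ =
          cyc4 α β γ δ ε a b c d) := by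
  intro a₁ b₁ c₁ d₁ a₂ b₂ c₂ d₂
  constructor
  · exact ⟨a₁ + a₂, b₁ + b₂, c₁ + c₂, d₁ + d₂, by
      ext i j
      fin_cases i <;> fin_cases j <;>
        simp [cyc4] <;> ring⟩
  · refine ⟨a₁*a₂ + α*b₁*c₂ + α*c₁*b₂ + β*γ*d₁*d₂,
      a₁*b₂ + b₁*a₂ + β*c₁*d₂ + β*d₁*c₂,
      a₁*c₂ + γ*b₁*d₂ + c₁*a₂ + γ*d₁*b₂,
      a₁*d₂ + δ*b₁*b₂ + ε*c₁*c₂ + d₁*a₂, ?_⟩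
    subst hβδ
    ext i j
    fin_cases i <;> fin_cases j <;>
      simp [cyc4, Matrix.mul_apply, Fin.sum_univ_four] <;>
      first
        | ring1
        | linear_combination (-(c₁*c₂)) * hγε
        | linear_combination (d₁*c₂) * hγε
        | linear_combination (β*c₁*d₂) * hγε
        | linear_combination (c₁*b₂) * hγε
        | linear_combination (-(d₁*b₂) - b₁*d₂) * hγε
        | linear_combination (-(β*c₁*c₂)) * hγε
        | linear_combination (b₁*c₂) * hγε
end

section
/- In a 4-dimensional associative real algebra with basis {1, i, j, k} satisfying i² = α, j² = β, k² = γ, jk = α′i, kj = α″i, ki = β′j, ik = β″j, ij = γ′k, ji = γ″k, associativity implies αβ = γγ′γ″, βγ = αα′α″, and γα = ββ′β″. -/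
theorem stmt_13 {A : Type*} [Ring A] [Algebra ℝ A] (i j k : A)
    (α β γ α' β' γ' α'' β'' γ'' : ℝ)
    (hind : LinearIndependent ℝ ![(1 : A), i, j, k])
    (hi2 : i * i = algebraMap ℝ A α) (hj2 : j * j = algebraMap ℝ A β)
    (hk2 : k * k = algebraMap ℝ A γ)
    (hjk : j * k = algebraMap ℝ A α' * i) (hkj : k * j = algebraMap ℝ A α'' * i)
    (hki : k * i = algebraMap ℝ A β' * j) (hik : i * k = algebraMap ℝ A β'' * j)
    (hij : i * j = algebraMap ℝ A γ' * k) (hji : j * i = algebraMap ℝ A γ'' * k) :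
    α * β = γ * γ' * γ'' ∧ β * γ = α * α' * α'' ∧ γ * α = β * β' * β'' := by
  have h10 : (1 : A) ≠ 0 := by have := hind.ne_zero 0; simpa using this
  have hi0 : i ≠ 0 := by have := hind.ne_zero 1; simpa using this
  have hj0 : j ≠ 0 := by have := hind.ne_zero 2; simpa using this
  have hk0 : k ≠ 0 := by have := hind.ne_zero 3; simpa using this
  simp only [Algebra.algebraMap_eq_smul_one] at hi2 hj2 hk2 hjk hkj hki hik hij hji
  simp only [smul_mul_assoc, one_mul] at hjk hkj hki hik hij hji
  have key : ∀ (c d : ℝ) (x : A), x ≠ 0 → c • x = d • x → c = d := fun c d x hx h =>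
    smul_left_injective ℝ hx h
  have e2 : β = α' * γ'' := key _ _ k hk0 (by
    have h := mul_assoc j j k
    rw [hj2, hjk] at h
    simpa [smul_mul_assoc, mul_smul_comm, smul_smul, one_mul, hji] using h)
  have e3 : γ = β' * α'' := key _ _ i hi0 (by
    have h := mul_assoc k k i
    rw [hk2, hki] at h
    simpa [smul_mul_assoc, mul_smul_comm, smul_smul, one_mul, hkj] using h)
  have e4 : γ' * γ = α' * α := key _ _ (1 : A) h10 (by
    have h := mul_assoc i j k
    rw [hij, hjk] at h
    simpa [smul_mul_assoc, mul_smul_comm, smul_smul, one_mul, hk2, hi2] using h)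
  have e5 : α' * α = β' * β := key _ _ (1 : A) h10 (by
    have h := mul_assoc j k i
    rw [hjk, hki] at h
    simpa [smul_mul_assoc, mul_smul_comm, smul_smul, one_mul, hi2, hj2] using h)
  have e7 : β'' * β = α'' * α := key _ _ (1 : A) h10 (by
    have h := mul_assoc i k j
    rw [hik, hkj] at h
    simpa [smul_mul_assoc, mul_smul_comm, smul_smul, one_mul, hj2, hi2] using h)
  refine ⟨?_, ?_, ?_⟩
  · calc α * β = (α' * α) * γ'' := by rw [e2]; ring
      _ = (γ' * γ) * γ'' := by rw [e4]
      _ = γ * γ' * γ'' := by ring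
  · calc β * γ = (β' * β) * α'' := by rw [e3]; ring
      _ = (α' * α) * α'' := by rw [e5]
      _ = α * α' * α'' := by ring
  · calc γ * α = β' * (α'' * α) := by rw [e3]; ring
      _ = β' * (β'' * β) := by rw [e7]
      _ = β * β' * β'' := by ring
end

section
/- In the Klein 4D algebra with the multiplication rules above, associativity implies αα′ = ββ′ = γγ′ = α″β″γ″ and αα″ = ββ″ = γγ″ = α′β′γ′. -/
theorem stmt_14 {A : Type*} [Ring A] [Algebra ℝ A] (i j k : A)
    (α β γ α' β' γ' α'' β'' γ'' : ℝ)
    (hind : LinearIndependent ℝ ![(1 : A), i, j, k])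
    (hi2 : i * i = algebraMap ℝ A α) (hj2 : j * j = algebraMap ℝ A β)
    (hk2 : k * k = algebraMap ℝ A γ)
    (hjk : j * k = algebraMap ℝ A α' * i) (hkj : k * j = algebraMap ℝ A α'' * i)
    (hki : k * i = algebraMap ℝ A β' * j) (hik : i * k = algebraMap ℝ A β'' * j)
    (hij : i * j = algebraMap ℝ A γ' * k) (hji : j * i = algebraMap ℝ A γ'' * k) :
    (α * α' = β * β' ∧ β * β' = γ * γ' ∧ γ * γ' = α'' * β'' * γ'') ∧
    (α * α'' = β * β'' ∧ β * β'' = γ * γ'' ∧ γ * γ'' = α' * β' * γ') := by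
  have h1 : (1 : A) ≠ 0 := by simpa using hind.ne_zero 0
  haveI : Nontrivial A := ⟨1, 0, h1⟩
  have hi0 : i ≠ 0 := by simpa using hind.ne_zero 1
  have hj0 : j ≠ 0 := by simpa using hind.ne_zero 2
  have hfinj : Function.Injective (algebraMap ℝ A) := (algebraMap ℝ A).injective
  have central : ∀ (c : ℝ) (x y : A),
      x * (algebraMap ℝ A c * y) = algebraMap ℝ A c * (x * y) := by
    intro c x y
    rw [← mul_assoc, ← Algebra.commutes c x, mul_assoc]
  have canc : ∀ (v : A), v ≠ 0 → ∀ a b : ℝ,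
      algebraMap ℝ A a * v = algebraMap ℝ A b * v → a = b := by
    intro v hv a b h
    rw [← Algebra.smul_def, ← Algebra.smul_def] at h
    have h0 : (a - b) • v = 0 := by rw [sub_smul, h, sub_self]
    rcases smul_eq_zero.mp h0 with h' | h'
    · exact sub_eq_zero.mp h'
    · exact absurd h' hv
  -- scalar-only relations via injectivity of algebraMap
  have e1 : α' * α = β' * β := by
    apply hfinj
    calc algebraMap ℝ A (α' * α) = algebraMap ℝ A α' * (i * i) := by rw [hi2, map_mul]
      _ = (j * k) * i := by rw [hjk, mul_assoc]
      _ = j * (k * i) := mul_assoc j k i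
      _ = algebraMap ℝ A β' * (j * j) := by rw [hki, central]
      _ = algebraMap ℝ A (β' * β) := by rw [hj2, map_mul]
  have e2 : β' * β = γ' * γ := by
    apply hfinj
    calc algebraMap ℝ A (β' * β) = algebraMap ℝ A β' * (j * j) := by rw [hj2, map_mul]
      _ = (k * i) * j := by rw [hki, mul_assoc]
      _ = k * (i * j) := mul_assoc k i j
      _ = algebraMap ℝ A γ' * (k * k) := by rw [hij, central]
      _ = algebraMap ℝ A (γ' * γ) := by rw [hk2, map_mul]
  have e3 : α'' * α = β'' * β := by
    apply hfinj
    calc algebraMap ℝ A (α'' * α) = algebraMap ℝ A α'' * (i * i) := by rw [hi2, map_mul]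
      _ = i * (k * j) := by rw [hkj, central]
      _ = (i * k) * j := (mul_assoc i k j).symm
      _ = algebraMap ℝ A β'' * (j * j) := by rw [hik, mul_assoc]
      _ = algebraMap ℝ A (β'' * β) := by rw [hj2, map_mul]
  have e4 : β'' * β = γ'' * γ := by
    apply hfinj
    calc algebraMap ℝ A (β'' * β) = algebraMap ℝ A β'' * (j * j) := by rw [hj2, map_mul]
      _ = j * (i * k) := by rw [hik, central]
      _ = (j * i) * k := (mul_assoc j i k).symm
      _ = algebraMap ℝ A γ'' * (k * k) := by rw [hji, mul_assoc]
      _ = algebraMap ℝ A (γ'' * γ) := by rw [hk2, map_mul]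
  -- γ = β' * α''  from (k*k)*i = k*(k*i)
  have e5 : γ = β' * α'' := by
    apply canc i hi0
    calc algebraMap ℝ A γ * i = (k * k) * i := by rw [hk2]
      _ = k * (k * i) := mul_assoc k k i
      _ = algebraMap ℝ A β' * (k * j) := by rw [hki, central]
      _ = algebraMap ℝ A (β' * α'') * i := by rw [hkj, map_mul, mul_assoc]
  -- γ = β'' * α'  from (i*k)*k = i*(k*k)
  have e6 : γ = β'' * α' := by
    apply canc i hi0
    calc algebraMap ℝ A γ * i = i * (k * k) := by rw [hk2, Algebra.commutes]
      _ = (i * k) * k := (mul_assoc i k k).symm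
      _ = algebraMap ℝ A β'' * (j * k) := by rw [hik, mul_assoc]
      _ = algebraMap ℝ A (β'' * α') * i := by rw [hjk, map_mul, mul_assoc]
  -- γ' * β' = γ'' * β''  from (i*j)*i = i*(j*i)
  have e7 : γ' * β' = γ'' * β'' := by
    apply canc j hj0
    calc algebraMap ℝ A (γ' * β') * j
        = algebraMap ℝ A γ' * (algebraMap ℝ A β' * j) := by rw [map_mul, mul_assoc]
      _ = algebraMap ℝ A γ' * (k * i) := by rw [hki]
      _ = (i * j) * i := by rw [hij, mul_assoc]
      _ = i * (j * i) := mul_assoc i j i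
      _ = algebraMap ℝ A γ'' * (i * k) := by rw [hji, central]
      _ = algebraMap ℝ A (γ'' * β'') * j := by rw [hik, map_mul, mul_assoc]
  refine ⟨⟨by linarith [e1], by linarith [e2], ?_⟩, ⟨by linarith [e3], by linarith [e4], ?_⟩⟩
  · calc γ * γ' = α'' * (γ' * β') := by rw [e5]; ring
      _ = α'' * (γ'' * β'') := by rw [e7]
      _ = α'' * β'' * γ'' := by ring
  · calc γ * γ'' = α' * (γ'' * β'') := by rw [e6]; ring
      _ = α' * (γ' * β') := by rw [e7]
      _ = α' * β' * γ' := by ring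
end

section
/- With ρ = αβγ, ρ′ = α′β′γ′, ρ″ = α″β″γ″ in the Klein 4D algebra, the constraints imply ρρ′ρ″ = ρ′⁴ = ρ″⁴ = ρ² ≥ 0; in particular, ρ, ρ′, ρ″ are either all zero or all nonzero. -/
theorem stmt_15 (α β γ α' β' γ' α'' β'' γ'' : ℝ)
    (h1 : α * β = γ * γ' * γ'') (h2 : β * γ = α * α' * α'') (h3 : γ * α = β * β' * β'')
    (h4 : α * α' = β * β') (h5 : β * β' = γ * γ') (h6 : γ * γ' = α'' * β'' * γ'')
    (h7 : α * α'' = β * β'') (h8 : β * β'' = γ * γ'') (h9 : γ * γ'' = α' * β' * γ') :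
    let ρ := α * β * γ
    let ρ' := α' * β' * γ'
    let ρ'' := α'' * β'' * γ''
    ρ * ρ' * ρ'' = ρ' ^ 4 ∧ ρ' ^ 4 = ρ'' ^ 4 ∧ ρ'' ^ 4 = ρ ^ 2 ∧ 0 ≤ ρ ^ 2 ∧
      ((ρ = 0 ∧ ρ' = 0 ∧ ρ'' = 0) ∨ (ρ ≠ 0 ∧ ρ' ≠ 0 ∧ ρ'' ≠ 0)) := by
  intro ρ ρ' ρ''
  set s : ℝ := γ * γ' with hs
  set t : ℝ := γ * γ'' with ht
  have hA : ρ = s * t := by simp only [hs, ht, ρ]; linear_combination γ * h1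
  have hB : ρ' = t := by simp only [ht, ρ']; linear_combination -h9
  have hC : ρ'' = s := by simp only [hs, ρ'']; linear_combination -h6
  have hD : ρ * ρ' = s ^ 3 := by
    simp only [hs, ρ, ρ']
    linear_combination (β * β' * γ * γ') * h4 + (β * β' * γ * γ' + (γ * γ') ^ 2) * h5
  have hE : ρ * ρ'' = t ^ 3 := by
    simp only [ht, ρ, ρ'']
    linear_combination (β * β'' * γ * γ'') * h7 + (β * β'' * γ * γ'' + (γ * γ'') ^ 2) * h8
  -- from ρ = s*t and ρρ' = s^3 : s*t^2 = s^3 ; similarly t*s^2 = t^3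
  have k1 : s * t ^ 2 = s ^ 3 := by rw [hA, hB] at hD; linear_combination hD
  have k2 : t * s ^ 2 = t ^ 3 := by rw [hA, hC] at hE; linear_combination hE
  have g1 : ρ * ρ' * ρ'' = ρ' ^ 4 := by
    rw [hA, hB, hC]; linear_combination t * k2
  have g2 : ρ' ^ 4 = ρ'' ^ 4 := by
    rw [hB, hC]; linear_combination -t * k2 + s * k1
  have g3 : ρ'' ^ 4 = ρ ^ 2 := by
    rw [hA, hC]; linear_combination -s * k1
  refine ⟨g1, g2, g3, sq_nonneg _, ?_⟩
  by_cases hρ : ρ = 0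
  · left
    refine ⟨hρ, ?_, ?_⟩
    · have : ρ' ^ 4 = 0 := by rw [g2, g3, hρ]; ring
      exact pow_eq_zero_iff (by norm_num) |>.mp this
    · have : ρ'' ^ 4 = 0 := by rw [g3, hρ]; ring
      exact pow_eq_zero_iff (by norm_num) |>.mp this
  · right
    refine ⟨hρ, ?_, ?_⟩
    · intro h; apply hρ; rw [hB] at h; rw [hA, h, mul_zero]
    · intro h; apply hρ; rw [hC] at h; rw [hA, h, zero_mul]
end

section
/- The Klein 4D algebra is commutative (i.e., α′ = α″, β′ = β″, γ′ = γ″) only if ρ = αβγ ≥ 0, and if ρ > 0 then equality of primed and double-primed parameters is consistent with the constraints. -/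
theorem stmt_16 (α β γ : ℝ) :
    (∀ α' β' γ' α'' β'' γ'' : ℝ,
      (α * β = γ * γ' * γ'' ∧ β * γ = α * α' * α'' ∧ γ * α = β * β' * β'' ∧
       α * α' = β * β' ∧ β * β' = γ * γ' ∧ γ * γ' = α'' * β'' * γ'' ∧
       α * α'' = β * β'' ∧ β * β'' = γ * γ'' ∧ γ * γ'' = α' * β' * γ') →
      (α' = α'' ∧ β' = β'' ∧ γ' = γ'') → 0 ≤ α * β * γ) ∧
    (0 < α * β * γ →
      ∃ α' β' γ' α'' β'' γ'' : ℝ, α' = α'' ∧ β' = β'' ∧ γ' = γ'' ∧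
        α * β = γ * γ' * γ'' ∧ β * γ = α * α' * α'' ∧ γ * α = β * β' * β'' ∧
        α * α' = β * β' ∧ β * β' = γ * γ' ∧ γ * γ' = α'' * β'' * γ'' ∧
        α * α'' = β * β'' ∧ β * β'' = γ * γ'' ∧ γ * γ'' = α' * β' * γ') := by
  constructor
  · rintro α' β' γ' α'' β'' γ'' ⟨-, h2, -, -, -, -, -, -, -⟩ ⟨ha, -, -⟩
    subst ha
    have key : α * β * γ = (α * α') ^ 2 := by rw [mul_assoc, h2]; ring
    rw [key]; positivity
  · intro hρ
    have hα : α ≠ 0 := by rintro rfl; simp at hρ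
    have hβ : β ≠ 0 := by rintro rfl; rw [mul_comm, ← mul_assoc] at hρ; simp at hρ
    have hγ : γ ≠ 0 := by rintro rfl; simp at hρ
    set s := Real.sqrt (α * β * γ) with hs
    have hs2 : s * s = α * β * γ := Real.mul_self_sqrt hρ.le
    refine ⟨s / α, s / β, s / γ, s / α, s / β, s / γ, rfl, rfl, rfl, ?_, ?_, ?_, ?_, ?_, ?_, ?_, ?_, ?_⟩ <;>
      field_simp <;> first
      | linear_combination s * hs2
      | linear_combination (-s) * hs2
      | nlinarith [hs2, sq_nonneg s]
end

section
/- For a fixed real α, the 4×4 matrices [[a,b,c,d],[αb,a,αd,c],[αc,αd,a,b],[α²d,αc,αb,a]] (obtained by the Cayley–Dickson doubling of the 2D construction) form a commutative ring under matrix addition and multiplication, and the substitution (α_Klein, β, γ, α′, β′, γ′, α″, β″, γ″) = (α, α, α², α, α, 1, α, α, 1) satisfies the Klein 4D associativity constraints. -/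
/-- The 4×4 matrix obtained by Cayley–Dickson doubling of the 2D representation. -/
def cd4 (α a b c d : ℝ) : Matrix (Fin 4) (Fin 4) ℝ :=
  !![a, b, c, d;
     α * b, a, α * d, c;
     α * c, α * d, a, b;
     α ^ 2 * d, α * c, α * b, a]

lemma cd4_mul (α a b c d e f g h : ℝ) :
    cd4 α a b c d * cd4 α e f g h =
      cd4 α (a*e + α*b*f + α*c*g + α^2*d*h) (a*f + b*e + α*c*h + α*d*g)
        (a*g + α*b*h + c*e + α*d*f) (a*h + b*g + c*f + d*e) := by
  ext i j
  fin_cases i <;> fin_cases j <;>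
    simp [cd4, Matrix.mul_apply, Fin.sum_univ_four] <;> ring

lemma cd4_add (α a b c d e f g h : ℝ) :
    cd4 α a b c d + cd4 α e f g h = cd4 α (a+e) (b+f) (c+g) (d+h) := by
  ext i j
  fin_cases i <;> fin_cases j <;> simp [cd4] <;> ring

lemma cd4_neg (α a b c d : ℝ) :
    -cd4 α a b c d = cd4 α (-a) (-b) (-c) (-d) := by
  ext i j
  fin_cases i <;> fin_cases j <;> simp [cd4, Matrix.vecHead, Matrix.vecTail]

lemma cd4_one (α : ℝ) : (1 : Matrix (Fin 4) (Fin 4) ℝ) = cd4 α 1 0 0 0 := by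
  ext i j
  fin_cases i <;> fin_cases j <;> simp [cd4, Matrix.one_apply, Matrix.vecHead, Matrix.vecTail]

lemma cd4_zero (α : ℝ) : (0 : Matrix (Fin 4) (Fin 4) ℝ) = cd4 α 0 0 0 0 := by
  ext i j
  fin_cases i <;> fin_cases j <;> simp [cd4, Matrix.vecHead, Matrix.vecTail]

def cd4Subring (α : ℝ) : Subring (Matrix (Fin 4) (Fin 4) ℝ) where
  carrier := {z | ∃ a b c d : ℝ, z = cd4 α a b c d}
  mul_mem' := by
    rintro x y ⟨a,b,c,d,rfl⟩ ⟨e,f,g,h,rfl⟩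
    exact ⟨_, _, _, _, cd4_mul α a b c d e f g h⟩
  one_mem' := ⟨1, 0, 0, 0, cd4_one α⟩
  add_mem' := by
    rintro x y ⟨a,b,c,d,rfl⟩ ⟨e,f,g,h,rfl⟩
    exact ⟨_, _, _, _, cd4_add α a b c d e f g h⟩
  zero_mem' := ⟨0, 0, 0, 0, cd4_zero α⟩
  neg_mem' := by
    rintro x ⟨a,b,c,d,rfl⟩
    exact ⟨_, _, _, _, cd4_neg α a b c d⟩

theorem stmt_19 (α : ℝ) :
    (∃ S : Subring (Matrix (Fin 4) (Fin 4) ℝ),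
      (∀ z, z ∈ S ↔ ∃ a b c d : ℝ, z = cd4 α a b c d) ∧
      ∀ x ∈ S, ∀ y ∈ S, x * y = y * x) ∧
    (∀ αK β γ α' β' γ' α'' β'' γ'' : ℝ,
      (αK, β, γ, α', β', γ', α'', β'', γ'') =
        (α, α, α ^ 2, α, α, 1, α, α, 1) →
      αK * β = γ * γ' * γ'' ∧ β * γ = αK * α' * α'' ∧ γ * αK = β * β' * β'' ∧
      αK * α' = β * β' ∧ β * β' = γ * γ' ∧ γ * γ' = α'' * β'' * γ'' ∧
      αK * α'' = β * β'' ∧ β * β'' = γ * γ'' ∧ γ * γ'' = α' * β' * γ') := by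
  constructor
  · refine ⟨cd4Subring α, fun z => Iff.rfl, ?_⟩
    rintro x ⟨a,b,c,d,rfl⟩ y ⟨e,f,g,h,rfl⟩
    rw [cd4_mul, cd4_mul]
    ring_nf
  · rintro _ _ _ _ _ _ _ _ _ h
    simp only [Prod.mk.injEq] at h
    obtain ⟨h1,h2,h3,h4,h5,h6,h7,h8,h9⟩ := h
    subst h1 h2 h3 h4 h5 h6 h7 h8 h9
    refine ⟨by ring, by ring, by ring, by ring, by ring, by ring, by ring, by ring, by ring⟩
end
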